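/- Let t and N be natural numbers with t ≥ 1 and N > 3t, and set m = N − 2t and c = ⌊(m−1)/t⌋ + 1. Let V, W and C be multisets of real numbers with C ≤ V, C ≤ W, card(V) = card(W) = N, card(C) ≥ N − t, and C nonempty. Let A (resp. B) be the t-trimmed list of V (resp. of W), each of length m, and define avg_A = (1/c)·∑_{0≤i<c} A[i·t] and avg_B = (1/c)·∑_{0≤i<c} B[i·t]. Then min(C) ≤ avg_A ≤ max(C), min(C) ≤ avg_B ≤ max(C), and |avg_A − avg_B| ≤ (max(C) − min(C))/c. -/

import Mathlib

private lemma smono_gap {f : ℕ → ℕ} (hf : StrictMono f) (a d : ℕ) :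
    f a + d ≤ f (a + d) := by
  induction d with
  | zero => simp
  | succ d ih =>
    have := hf (by omega : a + d < a + d + 1)
    rw [(by omega : a + (d + 1) = a + d + 1)]
    omega

private lemma sorted_getD_mono {l : List ℝ} (h : l.Pairwise (· ≤ ·)) {i j : ℕ}
    (hij : i ≤ j) (hj : j < l.length) : l.getD i 0 ≤ l.getD j 0 := by
  rw [List.getD_eq_getElem _ _ (lt_of_le_of_lt hij hj), List.getD_eq_getElem _ _ hj]
  have := h.rel_get_of_le (a := ⟨i, lt_of_le_of_lt hij hj⟩) (b := ⟨j, hj⟩) hij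
  simpa using this

private lemma key_lemma (t N : ℕ) (ht : 1 ≤ t) (hN : 3 * t < N)
    (V C : Multiset ℝ) (hCV : C ≤ V) (hV : Multiset.card V = N)
    (hC : N - t ≤ Multiset.card C) :
    ∀ i < (N - 2 * t - 1) / t + 1,
      (C.sort (· ≤ ·)).getD (i * t) 0 ≤
        (((V.sort (· ≤ ·)).drop t).take (N - 2 * t)).getD (i * t) 0 ∧
      (((V.sort (· ≤ ·)).drop t).take (N - 2 * t)).getD (i * t) 0 ≤
        (C.sort (· ≤ ·)).getD ((i + 1) * t) 0 := by
  intro i hi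
  set lV := V.sort (· ≤ ·) with hlV
  set lC := C.sort (· ≤ ·) with hlC
  have hsortV : lV.Pairwise (· ≤ ·) := Multiset.pairwise_sort _ _
  have hsortC : lC.Pairwise (· ≤ ·) := Multiset.pairwise_sort _ _
  have hlenV : lV.length = N := by rw [hlV, Multiset.length_sort, hV]
  have hlenC : N - t ≤ lC.length := by rw [hlC, Multiset.length_sort]; exact hC
  have hlenC' : lC.length ≤ N := by
    rw [hlC, Multiset.length_sort, ← hV]; exact Multiset.card_le_card hCV
  have hsub : List.Sublist lC lV := by
    apply List.sublist_of_subperm_of_pairwise _ hsortC hsortV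
    rw [← Multiset.coe_le, hlC, hlV, Multiset.sort_eq, Multiset.sort_eq]
    exact hCV
  obtain ⟨f, hf⟩ := List.sublist_iff_exists_orderEmbedding_getElem?_eq.mp hsub
  have hfval : ∀ j, j < lC.length → f j < N ∧ lV.getD (f j) 0 = lC.getD j 0 := by
    intro j hj
    have h1 := hf j
    rw [List.getElem?_eq_getElem hj] at h1
    have hfj : f j < lV.length := by
      by_contra h
      rw [List.getElem?_eq_none (by omega)] at h1
      simp at h1
    rw [List.getElem?_eq_getElem hfj] at h1
    refine ⟨hlenV ▸ hfj, ?_⟩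
    rw [List.getD_eq_getElem _ _ hfj, List.getD_eq_getElem _ _ hj]
    exact (Option.some_injective _ h1).symm
  -- arithmetic setup
  have hq : (N - 2 * t - 1) / t * t ≤ N - 2 * t - 1 := Nat.div_mul_le_self _ _
  have hit : i * t ≤ N - 2 * t - 1 :=
    le_trans (Nat.mul_le_mul_right t (by omega)) hq
  set n := lC.length with hn
  -- A.getD (i*t) 0 = lV.getD (t + i*t) 0
  have hdlen : (lV.drop t).length = N - t := by simp [hlenV]
  have hitlt : i * t < ((lV.drop t).take (N - 2 * t)).length := by
    rw [List.length_take, hdlen]; omega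
  have hA : ((lV.drop t).take (N - 2 * t)).getD (i * t) 0 = lV.getD (t + i * t) 0 := by
    rw [List.getD_eq_getElem _ _ hitlt, List.getD_eq_getElem _ _ (by omega : t + i * t < lV.length)]
    rw [List.getElem_take, List.getElem_drop]
  constructor
  · -- lower bound: lC[i*t] = lV[f (i*t)] ≤ lV[t + i*t]
    have hjn : i * t < n := by omega
    obtain ⟨hfN, hfeq⟩ := hfval (i * t) hjn
    have hlastN := (hfval (n - 1) (by omega)).1
    have hgap := smono_gap f.strictMono (i * t) (n - 1 - i * t)
    rw [(by omega : i * t + (n - 1 - i * t) = n - 1)] at hgap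
    have hfle : f (i * t) ≤ t + i * t := by omega
    rw [hA, ← hfeq]
    exact sorted_getD_mono hsortV hfle (by omega)
  · -- upper bound: lV[t + i*t] ≤ lV[f (t+i*t)] = lC[t + i*t]
    have hpn : t + i * t < n := by omega
    obtain ⟨hfN, hfeq⟩ := hfval (t + i * t) hpn
    have hge : t + i * t ≤ f (t + i * t) := f.strictMono.le_apply
    rw [hA, (by ring : (i + 1) * t = t + i * t)]
    calc lV.getD (t + i * t) 0 ≤ lV.getD (f (t + i * t)) 0 :=
          sorted_getD_mono hsortV hge (by omega)
      _ = lC.getD (t + i * t) 0 := hfeq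

theorem approx_agreement_step (t N : ℕ) (ht : 1 ≤ t) (hN : 3 * t < N)
    (V W C : Multiset ℝ) (hCV : C ≤ V) (hCW : C ≤ W)
    (hV : Multiset.card V = N) (hW : Multiset.card W = N)
    (hC : N - t ≤ Multiset.card C) (hCne : C ≠ 0) :
    let m := N - 2 * t
    let c := (m - 1) / t + 1
    let A := ((V.sort (· ≤ ·)).drop t).take m
    let B := ((W.sort (· ≤ ·)).drop t).take m
    let avgA := (∑ i ∈ Finset.range c, A.getD (i * t) 0) / c
    let avgB := (∑ i ∈ Finset.range c, B.getD (i * t) 0) / c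
    (C.toFinset.min' (by simpa using hCne) ≤ avgA ∧
     avgA ≤ C.toFinset.max' (by simpa using hCne)) ∧
    (C.toFinset.min' (by simpa using hCne) ≤ avgB ∧
     avgB ≤ C.toFinset.max' (by simpa using hCne)) ∧
    |avgA - avgB| ≤
      (C.toFinset.max' (by simpa using hCne) - C.toFinset.min' (by simpa using hCne)) / c := by
  intro m c A B avgA avgB
  have hne : C.toFinset.Nonempty := by simpa using hCne
  set mn := C.toFinset.min' hne with hmn
  set mx := C.toFinset.max' hne with hmx
  have hm : m = N - 2 * t := rfl
  have hc : c = (N - 2 * t - 1) / t + 1 := rfl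
  have hAdef : A = ((V.sort (· ≤ ·)).drop t).take (N - 2 * t) := rfl
  have hBdef : B = ((W.sort (· ≤ ·)).drop t).take (N - 2 * t) := rfl
  set lC := C.sort (· ≤ ·) with hlC
  have hlenC : N - t ≤ lC.length := by rw [hlC, Multiset.length_sort]; exact hC
  have hkeyA := key_lemma t N ht hN V C hCV hV hC
  have hkeyB := key_lemma t N ht hN W C hCW hW hC
  set D : ℕ → ℝ := fun i => lC.getD (i * t) 0 with hD
  have hq : (N - 2 * t - 1) / t * t ≤ N - 2 * t - 1 := Nat.div_mul_le_self _ _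
  have hDmem : ∀ i ≤ c, D i ∈ C.toFinset := by
    intro i hic
    have h1 : i * t ≤ c * t := Nat.mul_le_mul_right t hic
    have h2 : c * t ≤ N - t - 1 := by
      rw [hc, Nat.add_mul, one_mul]; omega
    have hlt : i * t < lC.length := by omega
    rw [Multiset.mem_toFinset, ← Multiset.mem_sort (· ≤ ·), ← hlC]
    rw [hD]
    simp only [List.getD_eq_getElem _ _ hlt]
    exact List.getElem_mem hlt
  have hDmn : ∀ i ≤ c, mn ≤ D i := fun i hi => Finset.min'_le _ _ (hDmem i hi)
  have hDmx : ∀ i ≤ c, D i ≤ mx := fun i hi => Finset.le_max' _ _ (hDmem i hi)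
  have hc0 : (0 : ℝ) < (c : ℝ) := by positivity
  -- bounds for each selected entry
  have hAbnd : ∀ i ∈ Finset.range c, D i ≤ A.getD (i * t) 0 ∧ A.getD (i * t) 0 ≤ D (i + 1) := by
    intro i hi
    rw [Finset.mem_range] at hi
    have := hkeyA i (hc ▸ hi)
    rw [← hAdef] at this
    exact this
  have hBbnd : ∀ i ∈ Finset.range c, D i ≤ B.getD (i * t) 0 ∧ B.getD (i * t) 0 ≤ D (i + 1) := by
    intro i hi
    rw [Finset.mem_range] at hi
    have := hkeyB i (hc ▸ hi)
    rw [← hBdef] at this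
    exact this
  have hrange : ∀ (L : ℕ → ℝ),
      (∀ i ∈ Finset.range c, D i ≤ L i ∧ L i ≤ D (i + 1)) →
      mn ≤ (∑ i ∈ Finset.range c, L i) / c ∧ (∑ i ∈ Finset.range c, L i) / c ≤ mx := by
    intro L hL
    constructor
    · rw [le_div_iff₀ hc0]
      calc mn * c = ∑ _i ∈ Finset.range c, mn := by
            rw [Finset.sum_const, Finset.card_range, nsmul_eq_mul, mul_comm]
        _ ≤ ∑ i ∈ Finset.range c, L i :=
            Finset.sum_le_sum fun i hi =>
              le_trans (hDmn i (le_of_lt (Finset.mem_range.mp hi))) (hL i hi).1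
    · rw [div_le_iff₀ hc0]
      calc (∑ i ∈ Finset.range c, L i) ≤ ∑ _i ∈ Finset.range c, mx :=
            Finset.sum_le_sum fun i hi =>
              le_trans (hL i hi).2 (hDmx (i + 1) (Finset.mem_range.mp hi))
        _ = mx * c := by rw [Finset.sum_const, Finset.card_range, nsmul_eq_mul, mul_comm]
  have hA' := hrange _ hAbnd
  have hB' := hrange _ hBbnd
  refine ⟨hA', hB', ?_⟩
  -- difference bound
  have htel : ∑ i ∈ Finset.range c, (D (i + 1) - D i) = D c - D 0 := Finset.sum_range_sub D c
  have hdiff : ∀ (L L' : ℕ → ℝ),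
      (∀ i ∈ Finset.range c, D i ≤ L i ∧ L i ≤ D (i + 1)) →
      (∀ i ∈ Finset.range c, D i ≤ L' i ∧ L' i ≤ D (i + 1)) →
      (∑ i ∈ Finset.range c, L i) - (∑ i ∈ Finset.range c, L' i) ≤ mx - mn := by
    intro L L' hL hL'
    rw [← Finset.sum_sub_distrib]
    calc (∑ i ∈ Finset.range c, (L i - L' i)) ≤ ∑ i ∈ Finset.range c, (D (i + 1) - D i) :=
          Finset.sum_le_sum fun i hi => by
            have h1 := (hL i hi).2
            have h2 := (hL' i hi).1
            linarith
      _ = D c - D 0 := htel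
      _ ≤ mx - mn := by
          have h1 := hDmx c le_rfl
          have h2 := hDmn 0 (Nat.zero_le _)
          linarith
  have h1 := hdiff _ _ hAbnd hBbnd
  have h2 := hdiff _ _ hBbnd hAbnd
  have habs : |(∑ i ∈ Finset.range c, A.getD (i * t) 0) - ∑ i ∈ Finset.range c, B.getD (i * t) 0| ≤ mx - mn :=
    abs_le.mpr ⟨by linarith, h1⟩
  have : avgA - avgB = ((∑ i ∈ Finset.range c, A.getD (i * t) 0) - ∑ i ∈ Finset.range c, B.getD (i * t) 0) / c := by
    rw [div_sub_div_same]
  rw [this, abs_div, abs_of_pos hc0]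
  gcongr
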